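/- The feasible region of the fractional program is not downward-closed: in the instance with two platforms and n = 2 bid levels, where c_1(μ) = μ, v_1(μ) = (8/3)μ, c_2(μ) = μ, v_2(μ) = μ on {0,1,2} (extended by linear interpolation), budget B = 10 and target ROS T = 1/2, the fractional strategy (3/2, 1) is feasible, but the coordinatewise smaller strategy (1, 1) is infeasible (it violates the ROS constraint). -/
import Mathlib

/-- Linear interpolation of `f : ℕ → ℝ` to nonnegative reals:
for `⌊x⌋ ≤ x ≤ ⌊x⌋ + 1`,
`interp f x = (⌈x⌉ − x)·f(⌊x⌋) + (x − ⌊x⌋)·f(⌈x⌉)`. -/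
noncomputable def interp (f : ℕ → ℝ) (x : ℝ) : ℝ :=
  f ⌊x⌋₊ + (x - ⌊x⌋₊) * (f (⌊x⌋₊ + 1) - f ⌊x⌋₊)

/-- The feasible region is not downward-closed: in the two-platform instance
with `c₁(μ) = μ`, `v₁(μ) = (8/3)μ`, `c₂(μ) = μ`, `v₂(μ) = μ`, budget `B = 10`
and target ROS `T = 1/2`, the fractional strategy `(3/2, 1)` is feasible, but
the coordinatewise smaller strategy `(1, 1)` is infeasible: it violates the
ROS constraint. -/
theorem feasible_region_not_downward_closed
    (c₁ v₁ c₂ v₂ : ℕ → ℝ)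
    (hc₁ : ∀ μ, c₁ μ = μ) (hv₁ : ∀ μ, v₁ μ = (8 / 3) * μ)
    (hc₂ : ∀ μ, c₂ μ = μ) (hv₂ : ∀ μ, v₂ μ = μ) :
    (interp c₁ (3 / 2) + interp c₂ 1 ≤
        (1 / 2) * (interp v₁ (3 / 2) + interp v₂ 1) ∧
      interp c₁ (3 / 2) + interp c₂ 1 ≤ 10) ∧
    ¬ (interp c₁ 1 + interp c₂ 1 ≤ (1 / 2) * (interp v₁ 1 + interp v₂ 1) ∧
        interp c₁ 1 + interp c₂ 1 ≤ 10) ∧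
    (1 / 2) * (interp v₁ 1 + interp v₂ 1) < interp c₁ 1 + interp c₂ 1 := by
  have h32 : (⌊(3 / 2 : ℝ)⌋₊ : ℕ) = 1 := by
    rw [Nat.floor_eq_iff] <;> norm_num
  have h1 : (⌊(1 : ℝ)⌋₊ : ℕ) = 1 := by norm_num
  simp only [interp, h32, h1, hc₁, hv₁, hc₂, hv₂]
  norm_num
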